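/- For any regular language L, the language √L = { w | ww ∈ L } is regular. -/

import Mathlib

private def sqrtDFA {α σ : Type} (M : DFA α σ) : DFA α (σ → σ) where
  step f a := fun q => M.step (f q) a
  start := id
  accept := {f | f (f M.start) ∈ M.accept}

private lemma sqrtDFA_evalFrom {α σ : Type} (M : DFA α σ) :
    ∀ (w : List α) (f : σ → σ), (sqrtDFA M).evalFrom f w = fun q => M.evalFrom (f q) w := by
  intro w
  induction w with
  | nil => intro f; rfl
  | cons a w ih =>
    intro f
    show (sqrtDFA M).evalFrom ((sqrtDFA M).step f a) w = _
    rw [ih]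
    rfl

/-- The square root of a regular language is regular. -/
theorem sqrt_isRegular {α : Type} (L : Language α) (hL : L.IsRegular) :
    Language.IsRegular {w : List α | w ++ w ∈ L} := by
  obtain ⟨σ, inst, M, rfl⟩ := hL
  haveI := inst
  haveI : DecidableEq σ := Classical.decEq σ
  exact ⟨σ → σ, inferInstance, sqrtDFA M, by
    ext w
    rw [DFA.mem_accepts, DFA.eval, sqrtDFA_evalFrom]
    show M.evalFrom (M.evalFrom M.start w) w ∈ M.accept ↔ _
    show _ ↔ w ++ w ∈ M.accepts
    rw [DFA.mem_accepts, DFA.eval, DFA.evalFrom_of_append]⟩
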